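/- (Algebraic content of Lemma 3.4 of the paper.) Let n ≥ 1 and let a, a' ∈ O_L with ϖ ∣ a, ϖ ∣ a' and a ≡ a' (mod ϖ^n·O_L). Let (F_m)_{m≥0} and (F'_m)_{m≥0} be sequences in Λ that are norm-compatible for a and for a' respectively, and suppose F_m ≡ F'_m (mod (ϖ^n, ω_m)·Λ) for every m ≥ 0. Let (F^♯, F^♭) and (F'^♯, F'^♭) be the unique pairs attached to these sequences by Theorem 3.3 (so that H_m·(F^♯, F^♭)ᵀ ≡ (F_m, −Φ_m·F_{m−1})ᵀ mod ω_m·Λ, and likewise for the primed data with the matrices built from a'). Then F^♯ ≡ F'^♯ and F^♭ ≡ F'^♭ (mod ϖ^n·Λ). -/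

import Mathlib

open PowerSeries

/-- `ω_m = (1+X)^{p^m} − 1`. -/
noncomputable def omegaPS (p : ℕ) (R : Type*) [CommRing R] (m : ℕ) : PowerSeries R :=
  (1 + PowerSeries.X) ^ (p ^ m) - 1

/-- `Φ_m = Σ_{i<p} (1+X)^{i·p^{m−1}}` (meaningful for `m ≥ 1`). -/
noncomputable def PhiPS (p : ℕ) (R : Type*) [CommRing R] (m : ℕ) : PowerSeries R :=
  ∑ i ∈ Finset.range p, (1 + PowerSeries.X) ^ (i * p ^ (m - 1))

/-- The matrix `C_j = ((a, 1), (−Φ_j, 0))`. -/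
noncomputable def Cmat (p : ℕ) (R : Type*) [CommRing R] (a : R) (j : ℕ) :
    Matrix (Fin 2) (Fin 2) (PowerSeries R) :=
  !![PowerSeries.C (R := R) a, 1; -(PhiPS p R j), 0]

/-- `H_m = C_m · C_{m−1} ⋯ C_1` (with `H_0 = 1`). -/
noncomputable def Hmat (p : ℕ) (R : Type*) [CommRing R] (a : R) :
    ℕ → Matrix (Fin 2) (Fin 2) (PowerSeries R)
  | 0 => 1
  | m + 1 => Cmat p R a (m + 1) * Hmat p R a m

/-- A sequence `(F_m)_{m≥0}` in `Λ` is norm-compatible for `a` if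
`F_{m+1} ≡ a·F_m − Φ_m·F_{m−1} (mod ω_m·Λ)` for every `m ≥ 1`. -/
def NormCompat (p : ℕ) (R : Type*) [CommRing R] (a : R) (F : ℕ → PowerSeries R) : Prop :=
  ∀ m : ℕ, 1 ≤ m →
    omegaPS p R m ∣ (F (m + 1) - (PowerSeries.C (R := R) a * F m - PhiPS p R m * F (m - 1)))

lemma phi_mul_omega (p : ℕ) (R : Type*) [CommRing R] (m : ℕ) :
    PhiPS p R (m+1) * omegaPS p R m = omegaPS p R (m+1) := by
  have h : ∀ i ∈ Finset.range p, (1 + X : R⟦X⟧) ^ (i * p ^ m) = ((1+X) ^ (p ^ m)) ^ i := by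
    intro i _; rw [← pow_mul, mul_comm]
  unfold PhiPS omegaPS
  simp only [Nat.add_sub_cancel]
  rw [Finset.sum_congr rfl h, geom_sum_mul, ← pow_mul, ← pow_succ]

lemma omega_charP (p : ℕ) [Fact p.Prime] (K : Type*) [CommRing K] [CharP K p] (m : ℕ) :
    omegaPS p K m = X ^ (p ^ m) := by
  haveI : CharP K⟦X⟧ p := charP_of_injective_ringHom C_injective p
  unfold omegaPS
  rw [add_comm, add_pow_char_pow, one_pow, add_sub_cancel_right]

lemma phi_charP (p : ℕ) [Fact p.Prime] (K : Type*) [CommRing K] [IsDomain K] [CharP K p] (m : ℕ) :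
    PhiPS p K (m+1) = X ^ (p ^ (m+1) - p ^ m) := by
  have hle : p ^ m ≤ p ^ (m+1) :=
    Nat.pow_le_pow_right (Fact.out : p.Prime).pos m.le_succ
  have h := phi_mul_omega p K m
  rw [omega_charP, omega_charP] at h
  have h2 : (X : K⟦X⟧) ^ (p ^ (m+1)) = X ^ (p^(m+1) - p^m) * X ^ (p^m) := by
    rw [← pow_add, Nat.sub_add_cancel hle]
  rw [h2] at h
  exact mul_right_cancel₀ (pow_ne_zero _ X_ne_zero) h
lemma C_dvd_iff_coeff {R : Type*} [CommRing R] (r : R) (f : R⟦X⟧) :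
    C (R := R) r ∣ f ↔ ∀ i, r ∣ coeff i f := by
  constructor
  · rintro ⟨g, rfl⟩ i; rw [coeff_C_mul]; exact ⟨_, rfl⟩
  · intro h
    refine ⟨PowerSeries.mk (fun i => (h i).choose), ?_⟩
    ext i
    rw [coeff_C_mul, coeff_mk]
    exact (h i).choose_spec

lemma map_quotient_eq_zero_iff {R : Type*} [CommRing R] (r : R) (f : R⟦X⟧) :
    PowerSeries.map (Ideal.Quotient.mk (Ideal.span {r})) f = 0 ↔ C (R := R) r ∣ f := by
  rw [C_dvd_iff_coeff]
  constructor
  · intro h i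
    have h2 := congrArg (coeff i) h
    rw [coeff_map, map_zero] at h2
    rwa [Ideal.Quotient.eq_zero_iff_mem, Ideal.mem_span_singleton] at h2
  · intro h; ext i
    rw [coeff_map, map_zero, Ideal.Quotient.eq_zero_iff_mem, Ideal.mem_span_singleton]
    exact h i

lemma map_omegaPS {R S : Type*} [CommRing R] [CommRing S] (f : R →+* S) (p m : ℕ) :
    PowerSeries.map f (omegaPS p R m) = omegaPS p S m := by
  simp [omegaPS]

lemma map_PhiPS {R S : Type*} [CommRing R] [CommRing S] (f : R →+* S) (p m : ℕ) :
    PowerSeries.map f (PhiPS p R m) = PhiPS p S m := by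
  simp [PhiPS]

lemma Hmat_row1 (p : ℕ) (R : Type*) [CommRing R] (a : R) (m : ℕ) (j : Fin 2) :
    Hmat p R a (m+1) 1 j = -(PhiPS p R (m+1) * Hmat p R a m 0 j) := by
  show (Cmat p R a (m+1) * Hmat p R a m) 1 j = _
  rw [Matrix.mul_apply, Fin.sum_univ_two]
  simp [Cmat]

lemma Hmat_row0 (p : ℕ) (R : Type*) [CommRing R] (a : R) (m : ℕ) (j : Fin 2) :
    Hmat p R a (m+1) 0 j = C (R := R) a * Hmat p R a m 0 j + Hmat p R a m 1 j := by
  show (Cmat p R a (m+1) * Hmat p R a m) 0 j = _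
  rw [Matrix.mul_apply, Fin.sum_univ_two]
  simp [Cmat]

lemma Hmat_rec (p : ℕ) (R : Type*) [CommRing R] (a : R) (m : ℕ) (j : Fin 2) :
    Hmat p R a (m+2) 0 j
      = C (R := R) a * Hmat p R a (m+1) 0 j - PhiPS p R (m+1) * Hmat p R a m 0 j := by
  rw [Hmat_row0, Hmat_row1]; ring

lemma Hmat_zero (p : ℕ) (R : Type*) [CommRing R] (a : R) :
    Hmat p R a 0 0 0 = 1 ∧ Hmat p R a 0 0 1 = 0
      ∧ Hmat p R a 0 1 0 = 0 ∧ Hmat p R a 0 1 1 = 1 := by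
  refine ⟨?_, ?_, ?_, ?_⟩ <;> · show (1 : Matrix (Fin 2) (Fin 2) R⟦X⟧) _ _ = _; simp [Matrix.one_apply]

lemma Hmat_one (p : ℕ) (R : Type*) [CommRing R] (a : R) :
    Hmat p R a 1 0 0 = C (R := R) a ∧ Hmat p R a 1 0 1 = 1 := by
  rcases Hmat_zero p R a with ⟨h1, h2, h3, h4⟩
  constructor
  · have h := Hmat_row0 p R a 0 0
    rw [h1, h3] at h; simpa using h
  · have h := Hmat_row0 p R a 0 1
    rw [h2, h4] at h; simpa using h

lemma Hmat_entry_congr {R : Type*} [CommRing R] (p : ℕ) (r a a' : R) (h : r ∣ a - a') :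
    ∀ m (i j : Fin 2), C (R := R) r ∣ Hmat p R a m i j - Hmat p R a' m i j := by
  intro m
  induction m with
  | zero => intro i j; simp [Hmat]
  | succ m ih =>
    intro i j
    have key : ∀ l : Fin 2, C (R := R) r ∣ Cmat p R a (m+1) i l - Cmat p R a' (m+1) i l := by
      intro l
      fin_cases i <;> fin_cases l <;>
        simp [Cmat] <;>
        · rw [← map_sub]; exact map_dvd (C (R := R)) h
    show C (R := R) r ∣ (Cmat p R a (m+1) * Hmat p R a m) i j - (Cmat p R a' (m+1) * Hmat p R a' m) i j
    rw [Matrix.mul_apply, Matrix.mul_apply, Fin.sum_univ_two, Fin.sum_univ_two]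
    have e : (Cmat p R a (m+1) i 0 * Hmat p R a m 0 j + Cmat p R a (m+1) i 1 * Hmat p R a m 1 j)
        - (Cmat p R a' (m+1) i 0 * Hmat p R a' m 0 j + Cmat p R a' (m+1) i 1 * Hmat p R a' m 1 j)
      = Cmat p R a (m+1) i 0 * (Hmat p R a m 0 j - Hmat p R a' m 0 j)
        + Cmat p R a (m+1) i 1 * (Hmat p R a m 1 j - Hmat p R a' m 1 j)
        + ((Cmat p R a (m+1) i 0 - Cmat p R a' (m+1) i 0) * Hmat p R a' m 0 j
        + (Cmat p R a (m+1) i 1 - Cmat p R a' (m+1) i 1) * Hmat p R a' m 1 j) := by ring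
    rw [e]
    exact dvd_add (dvd_add ((ih 0 j).mul_left _) ((ih 1 j).mul_left _))
      (dvd_add ((key 0).mul_right _) ((key 1).mul_right _))
def cexp (p : ℕ) : ℕ → ℕ
  | 0 => 0
  | j+1 => cexp p j + (p ^ (2*j+1) - p ^ (2*j))

def dexp (p : ℕ) : ℕ → ℕ
  | 0 => 0
  | j+1 => dexp p j + (p ^ (2*j+2) - p ^ (2*j+1))

lemma cexp_bound (p : ℕ) (hp : 2 ≤ p) : ∀ j, cexp p j + j ≤ p ^ (2*j)
  | 0 => by simp [cexp]
  | (j+1) => by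
    have ih := cexp_bound p hp j
    have h1 : p ^ (2*j) ≤ p ^ (2*j+1) := Nat.pow_le_pow_right (by omega) (by omega)
    have e : p ^ (2*(j+1)) = p ^ (2*j+1) * p := by
      rw [show 2*(j+1) = (2*j+1)+1 by omega, pow_succ]
    have h2 : p ^ (2*j+1) * 2 ≤ p ^ (2*j+1) * p := Nat.mul_le_mul_left _ hp
    have h3 : 1 ≤ p ^ (2*j+1) := Nat.one_le_pow _ _ (by omega)
    show cexp p j + (p ^ (2*j+1) - p ^ (2*j)) + (j+1) ≤ p ^ (2*(j+1))
    omega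

lemma dexp_bound (p : ℕ) (hp : 2 ≤ p) : ∀ j, dexp p j + j ≤ p ^ (2*j+1)
  | 0 => by
    have : 1 ≤ p ^ 1 := Nat.one_le_pow _ _ (by omega)
    simpa [dexp] using this
  | (j+1) => by
    have ih := dexp_bound p hp j
    have h1 : p ^ (2*j+1) ≤ p ^ (2*j+2) := Nat.pow_le_pow_right (by omega) (by omega)
    have e : p ^ (2*(j+1)+1) = p ^ (2*j+2) * p := by
      rw [show 2*(j+1)+1 = (2*j+2)+1 by omega, pow_succ]
    have h2 : p ^ (2*j+2) * 2 ≤ p ^ (2*j+2) * p := Nat.mul_le_mul_left _ hp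
    have h3 : 1 ≤ p ^ (2*j+2) := Nat.one_le_pow _ _ (by omega)
    show dexp p j + (p ^ (2*j+2) - p ^ (2*j+1)) + (j+1) ≤ p ^ (2*(j+1)+1)
    omega
lemma map_eq_zero_iff_dvd {R K : Type*} [CommRing R] [CommRing K] (q : R →+* K) (r : R)
    (hker : ∀ x, q x = 0 ↔ r ∣ x) (f : R⟦X⟧) :
    PowerSeries.map q f = 0 ↔ C (R := R) r ∣ f := by
  rw [C_dvd_iff_coeff]
  constructor
  · intro h i
    have h2 := congrArg (coeff i) h
    rw [coeff_map, map_zero] at h2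
    exact (hker _).1 h2
  · intro h; ext i
    rw [coeff_map, map_zero]
    exact (hker _).2 (h i)

lemma key_lemma_aux
    (p : ℕ) (hp : p.Prime)
    (𝕆 : Type*) [CommRing 𝕆] [IsDomain 𝕆]
    (ϖ : 𝕆) (hϖ : Irreducible ϖ) (a : 𝕆)
    (K : Type*) [CommRing K] [IsDomain K] [CharP K p]
    (q : 𝕆 →+* K) (hker : ∀ x : 𝕆, q x = 0 ↔ ϖ ∣ x)
    (hqa : q a = 0) :
    ∀ (n : ℕ) (w0 w1 : PowerSeries 𝕆),
      (∀ m : ℕ, 1 ≤ m →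
        Hmat p 𝕆 a m 0 0 * w0 + Hmat p 𝕆 a m 0 1 * w1 ∈
          Ideal.span ({PowerSeries.C (R := 𝕆) (ϖ ^ n), omegaPS p 𝕆 m} : Set (PowerSeries 𝕆))) →
      (PowerSeries.C (R := 𝕆) ϖ) ^ n ∣ w0 ∧ (PowerSeries.C (R := 𝕆) ϖ) ^ n ∣ w1 := by
  haveI : Fact p.Prime := ⟨hp⟩
  set φ : PowerSeries 𝕆 →+* PowerSeries K := PowerSeries.map q with hφ
  have hφω : ∀ m : ℕ, φ (omegaPS p 𝕆 m) = X ^ (p ^ m) := by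
    intro m; rw [hφ, map_omegaPS]; exact omega_charP p K m
  have hφΦ : ∀ m : ℕ, φ (PhiPS p 𝕆 (m+1)) = X ^ (p ^ (m+1) - p ^ m) := by
    intro m; rw [hφ, map_PhiPS]; exact phi_charP p K m
  set α : ℕ → PowerSeries K := fun m => φ (Hmat p 𝕆 a m 0 0) with hα
  set β : ℕ → PowerSeries K := fun m => φ (Hmat p 𝕆 a m 0 1) with hβ
  have hα0 : α 0 = 1 := by rw [hα]; simp only; rw [(Hmat_zero p 𝕆 a).1, map_one]
  have hβ0 : β 0 = 0 := by rw [hβ]; simp only; rw [(Hmat_zero p 𝕆 a).2.1, map_zero]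
  have hα1 : α 1 = 0 := by
    rw [hα]; simp only; rw [(Hmat_one p 𝕆 a).1, hφ, PowerSeries.map_C, hqa, map_zero]
  have hβ1 : β 1 = 1 := by rw [hβ]; simp only; rw [(Hmat_one p 𝕆 a).2, map_one]
  have hrecα : ∀ m : ℕ, α (m+2) = -(X ^ (p ^ (m+1) - p ^ m) * α m) := by
    intro m
    have h := congrArg φ (Hmat_rec p 𝕆 a m 0)
    rw [map_sub, map_mul, map_mul, hφΦ] at h
    rw [hφ, PowerSeries.map_C, hqa, map_zero, zero_mul, zero_sub] at h
    exact h
  have hrecβ : ∀ m : ℕ, β (m+2) = -(X ^ (p ^ (m+1) - p ^ m) * β m) := by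
    intro m
    have h := congrArg φ (Hmat_rec p 𝕆 a m 1)
    rw [map_sub, map_mul, map_mul, hφΦ] at h
    rw [hφ, PowerSeries.map_C, hqa, map_zero, zero_mul, zero_sub] at h
    exact h
  have hform : ∀ j : ℕ, α (2*j) = (-1)^j * X^(cexp p j) ∧ β (2*j) = 0
      ∧ α (2*j+1) = 0 ∧ β (2*j+1) = (-1)^j * X^(dexp p j) := by
    intro j
    induction j with
    | zero => simpa [cexp, dexp] using ⟨hα0, hβ0, hα1, hβ1⟩
    | succ j ih =>
      obtain ⟨h1, h2, h3, h4⟩ := ih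
      have e1 : 2*(j+1) = (2*j) + 2 := by ring
      have e2 : 2*(j+1)+1 = (2*j+1) + 2 := by ring
      refine ⟨?_, ?_, ?_, ?_⟩
      · rw [e1, hrecα (2*j), h1, show cexp p (j+1) = cexp p j + (p ^ (2*j+1) - p ^ (2*j)) from rfl,
          pow_add, pow_succ]
        ring
      · rw [e1, hrecβ (2*j), h2, mul_zero, neg_zero]
      · rw [e2, hrecα (2*j+1), h3, mul_zero, neg_zero]
      · rw [e2, hrecβ (2*j+1), h4, show dexp p (j+1) = dexp p j + (p ^ (2*j+2) - p ^ (2*j+1)) from rfl,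
          pow_add, pow_succ]
        ring
  intro n
  induction n with
  | zero => intro w0 w1 _; simp
  | succ n ih =>
    intro w0 w1 hmem
    have hCn1 : φ (PowerSeries.C (R := 𝕆) (ϖ ^ (n+1))) = 0 := by
      rw [hφ, PowerSeries.map_C, (hker _).2 (dvd_pow_self ϖ (Nat.succ_ne_zero n)), map_zero]
    have hXdvd : ∀ m, 1 ≤ m → (X : PowerSeries K) ^ (p ^ m) ∣ (α m * φ w0 + β m * φ w1) := by
      intro m hm
      obtain ⟨g, h, hgh⟩ := Ideal.mem_span_pair.1 (hmem m hm)
      have h2 := congrArg φ hgh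
      rw [map_add, map_mul, map_mul, hCn1, mul_zero, zero_add, hφω, map_add, map_mul, map_mul] at h2
      exact ⟨φ h, by rw [← h2]; ring⟩
    have hw0 : φ w0 = 0 := by
      ext i
      obtain ⟨hA, hB, -, -⟩ := hform (i+1)
      have hd := hXdvd (2*(i+1)) (by omega)
      rw [hA, hB, zero_mul, add_zero] at hd
      have hd2 : (X : PowerSeries K) ^ (p ^ (2*(i+1))) ∣ X ^ (cexp p (i+1)) * φ w0 := by
        have h3 := hd.mul_left ((-1 : PowerSeries K)^(i+1))
        have e : ((-1 : PowerSeries K)^(i+1)) * (((-1 : PowerSeries K)^(i+1) * X^(cexp p (i+1))) * φ w0)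
            = X^(cexp p (i+1)) * φ w0 := by
          rw [← mul_assoc, ← mul_assoc, ← mul_pow, neg_mul_neg, one_mul, one_pow, one_mul]
        rwa [e] at h3
      have hcb := cexp_bound p hp.two_le (i+1)
      have hle : cexp p (i+1) ≤ p ^ (2*(i+1)) := by omega
      rw [show p ^ (2*(i+1)) = cexp p (i+1) + (p ^ (2*(i+1)) - cexp p (i+1)) by omega,
        pow_add] at hd2
      have hd3 : (X : PowerSeries K) ^ (p ^ (2*(i+1)) - cexp p (i+1)) ∣ φ w0 :=
        (mul_dvd_mul_iff_left (pow_ne_zero _ (X_ne_zero))).1 hd2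
      have hd4 : (X : PowerSeries K) ^ (i+1) ∣ φ w0 :=
        (pow_dvd_pow X (by omega)).trans hd3
      have := X_pow_dvd_iff.1 hd4 i (Nat.lt_succ_self i)
      simpa using this
    have hw1 : φ w1 = 0 := by
      ext i
      obtain ⟨-, -, hA, hB⟩ := hform (i+1)
      have hd := hXdvd (2*(i+1)+1) (by omega)
      rw [hA, hB, zero_mul, zero_add] at hd
      have hd2 : (X : PowerSeries K) ^ (p ^ (2*(i+1)+1)) ∣ X ^ (dexp p (i+1)) * φ w1 := by
        have h3 := hd.mul_left ((-1 : PowerSeries K)^(i+1))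
        have e : ((-1 : PowerSeries K)^(i+1)) * (((-1 : PowerSeries K)^(i+1) * X^(dexp p (i+1))) * φ w1)
            = X^(dexp p (i+1)) * φ w1 := by
          rw [← mul_assoc, ← mul_assoc, ← mul_pow, neg_mul_neg, one_mul, one_pow, one_mul]
        rwa [e] at h3
      have hcb := dexp_bound p hp.two_le (i+1)
      have hle : dexp p (i+1) ≤ p ^ (2*(i+1)+1) := by omega
      rw [show p ^ (2*(i+1)+1) = dexp p (i+1) + (p ^ (2*(i+1)+1) - dexp p (i+1)) by omega,
        pow_add] at hd2
      have hd3 : (X : PowerSeries K) ^ (p ^ (2*(i+1)+1) - dexp p (i+1)) ∣ φ w1 :=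
        (mul_dvd_mul_iff_left (pow_ne_zero _ (X_ne_zero))).1 hd2
      have hd4 : (X : PowerSeries K) ^ (i+1) ∣ φ w1 :=
        (pow_dvd_pow X (by omega)).trans hd3
      have := X_pow_dvd_iff.1 hd4 i (Nat.lt_succ_self i)
      simpa using this
    obtain ⟨u0, hu0⟩ := (map_eq_zero_iff_dvd q ϖ hker w0).1 hw0
    obtain ⟨u1, hu1⟩ := (map_eq_zero_iff_dvd q ϖ hker w1).1 hw1
    have hCϖne : (PowerSeries.C (R := 𝕆) ϖ) ≠ 0 := fun hc =>
      hϖ.ne_zero (C_injective (by rw [hc, map_zero]))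
    have hmem' : ∀ m, 1 ≤ m →
        Hmat p 𝕆 a m 0 0 * u0 + Hmat p 𝕆 a m 0 1 * u1 ∈
          Ideal.span ({PowerSeries.C (R := 𝕆) (ϖ ^ n), omegaPS p 𝕆 m} : Set (PowerSeries 𝕆)) := by
      intro m hm
      obtain ⟨g, h, hgh⟩ := Ideal.mem_span_pair.1 (hmem m hm)
      have hφh : φ h = 0 := by
        have h2 := congrArg φ hgh
        rw [map_add, map_mul, map_mul, hCn1, mul_zero, zero_add, hφω,
          map_add, map_mul, map_mul, hw0, hw1, mul_zero, mul_zero, add_zero] at h2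
        rcases mul_eq_zero.1 h2 with h3 | h3
        · exact h3
        · exact absurd h3 (pow_ne_zero _ X_ne_zero)
      obtain ⟨h2, hh2⟩ := (map_eq_zero_iff_dvd q ϖ hker h).1 hφh
      have hCpow : PowerSeries.C (R := 𝕆) (ϖ^(n+1)) = PowerSeries.C (R := 𝕆) ϖ * PowerSeries.C (R := 𝕆) (ϖ^n) := by
        rw [← map_mul, ← pow_succ']
      have keyeq : PowerSeries.C (R := 𝕆) ϖ * (g * PowerSeries.C (R := 𝕆) (ϖ^n) + h2 * omegaPS p 𝕆 m)
          = PowerSeries.C (R := 𝕆) ϖ * (Hmat p 𝕆 a m 0 0 * u0 + Hmat p 𝕆 a m 0 1 * u1) := by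
        calc PowerSeries.C (R := 𝕆) ϖ * (g * PowerSeries.C (R := 𝕆) (ϖ^n) + h2 * omegaPS p 𝕆 m)
            = g * PowerSeries.C (R := 𝕆) (ϖ^(n+1)) + h * omegaPS p 𝕆 m := by rw [hCpow, hh2]; ring
          _ = Hmat p 𝕆 a m 0 0 * w0 + Hmat p 𝕆 a m 0 1 * w1 := hgh
          _ = _ := by rw [hu0, hu1]; ring
      exact Ideal.mem_span_pair.2 ⟨g, h2, mul_left_cancel₀ hCϖne keyeq⟩
    obtain ⟨hd0, hd1⟩ := ih u0 u1 hmem'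
    constructor
    · rw [hu0, pow_succ']; exact mul_dvd_mul_left _ hd0
    · rw [hu1, pow_succ']; exact mul_dvd_mul_left _ hd1

/-- algebraic content of Lemma 3.4 of the paper: suppose `ϖ ∣ a`,
`ϖ ∣ a'`, `a ≡ a' (mod ϖⁿ)`, `(F_m)` and `(F'_m)` are norm-compatible for `a` resp.
`a'`, and `F_m ≡ F'_m (mod (ϖⁿ, ω_m)·Λ)` for every `m ≥ 0`.  If `(F^♯, F^♭)` and
`(F'^♯, F'^♭)` are the pairs attached to these data by Theorem 3.3, then
`F^♯ ≡ F'^♯` and `F^♭ ≡ F'^♭ (mod ϖⁿ·Λ)`. -/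
theorem sharp_flat_congruence
    (p : ℕ) (hp : p.Prime) (hp5 : 5 ≤ p)
    (𝕆 : Type*) [CommRing 𝕆] [IsDomain 𝕆] [IsDiscreteValuationRing 𝕆] [CharZero 𝕆]
    (ϖ : 𝕆) (hϖ : Irreducible ϖ) (hpϖ : ϖ ∣ (p : 𝕆))
    (n : ℕ) (hn : 1 ≤ n)
    (a a' : 𝕆) (ha : ϖ ∣ a) (ha' : ϖ ∣ a') (haa' : ϖ ^ n ∣ (a - a'))
    (F F' : ℕ → PowerSeries 𝕆)
    (hF : NormCompat p 𝕆 a F) (hF' : NormCompat p 𝕆 a' F')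
    (hFF' : ∀ m : ℕ,
      F m - F' m ∈
        Ideal.span ({PowerSeries.C (R := 𝕆) (ϖ ^ n), omegaPS p 𝕆 m} : Set (PowerSeries 𝕆)))
    (Fs Fb Fs' Fb' : PowerSeries 𝕆)
    (hsharp : ∀ m : ℕ, 1 ≤ m → ∀ i : Fin 2,
      omegaPS p 𝕆 m ∣
        ((Hmat p 𝕆 a m).mulVec ![Fs, Fb] i - ![F m, -(PhiPS p 𝕆 m * F (m - 1))] i))
    (hsharp' : ∀ m : ℕ, 1 ≤ m → ∀ i : Fin 2,
      omegaPS p 𝕆 m ∣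
        ((Hmat p 𝕆 a' m).mulVec ![Fs', Fb'] i - ![F' m, -(PhiPS p 𝕆 m * F' (m - 1))] i)) :
    (PowerSeries.C (R := 𝕆) ϖ) ^ n ∣ (Fs - Fs') ∧ (PowerSeries.C (R := 𝕆) ϖ) ^ n ∣ (Fb - Fb') := by
  have hmem : ∀ m : ℕ, 1 ≤ m →
      Hmat p 𝕆 a m 0 0 * (Fs - Fs') + Hmat p 𝕆 a m 0 1 * (Fb - Fb') ∈
        Ideal.span ({PowerSeries.C (R := 𝕆) (ϖ ^ n), omegaPS p 𝕆 m} : Set (PowerSeries 𝕆)) := by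
    intro m hm
    set I := Ideal.span ({PowerSeries.C (R := 𝕆) (ϖ ^ n), omegaPS p 𝕆 m} : Set (PowerSeries 𝕆)) with hI
    have hωI : omegaPS p 𝕆 m ∈ I :=
      Ideal.subset_span (Set.mem_insert_of_mem _ rfl)
    have hdvd_mem : ∀ t : PowerSeries 𝕆, omegaPS p 𝕆 m ∣ t → t ∈ I := by
      rintro t ⟨c, rfl⟩; exact I.mul_mem_right c hωI
    have h1 := hsharp m hm 0
    have h1' := hsharp' m hm 0
    simp only [Matrix.mulVec, dotProduct, Fin.sum_univ_two, Matrix.cons_val_zero,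
      Matrix.cons_val_one, Matrix.head_cons] at h1 h1'
    have hA := Hmat_entry_congr p (ϖ ^ n) a a' haa' m 0 0
    have hB := Hmat_entry_congr p (ϖ ^ n) a a' haa' m 0 1
    have e : Hmat p 𝕆 a m 0 0 * (Fs - Fs') + Hmat p 𝕆 a m 0 1 * (Fb - Fb')
        = (Hmat p 𝕆 a m 0 0 * Fs + Hmat p 𝕆 a m 0 1 * Fb - F m)
          - (Hmat p 𝕆 a' m 0 0 * Fs' + Hmat p 𝕆 a' m 0 1 * Fb' - F' m)
          + ((Hmat p 𝕆 a m 0 0 - Hmat p 𝕆 a' m 0 0) * (-Fs')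
            + (Hmat p 𝕆 a m 0 1 - Hmat p 𝕆 a' m 0 1) * (-Fb'))
          + (F m - F' m) := by ring
    rw [e]
    refine I.add_mem (I.add_mem (I.sub_mem ?_ ?_) (I.add_mem ?_ ?_)) (hFF' m)
    · exact hdvd_mem _ h1
    · exact hdvd_mem _ h1'
    · obtain ⟨c, hc⟩ := hA
      rw [hc, mul_assoc]
      exact I.mul_mem_right _ (Ideal.subset_span (Set.mem_insert _ _))
    · obtain ⟨c, hc⟩ := hB
      rw [hc, mul_assoc]
      exact I.mul_mem_right _ (Ideal.subset_span (Set.mem_insert _ _))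
  haveI : Fact p.Prime := ⟨hp⟩
  have hprime : Prime ϖ := hϖ.prime
  haveI hpr : (Ideal.span {ϖ}).IsPrime := (Ideal.span_singleton_prime hϖ.ne_zero).2 hprime
  haveI : IsDomain (𝕆 ⧸ Ideal.span {ϖ}) := Ideal.Quotient.isDomain _
  have hker : ∀ x : 𝕆, Ideal.Quotient.mk (Ideal.span {ϖ}) x = 0 ↔ ϖ ∣ x := fun x => by
    rw [Ideal.Quotient.eq_zero_iff_mem, Ideal.mem_span_singleton]
  have hpK : ((p : ℕ) : 𝕆 ⧸ Ideal.span {ϖ}) = 0 := by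
    have h0 := (hker (p : 𝕆)).2 hpϖ
    rwa [map_natCast] at h0
  haveI hcharP : CharP (𝕆 ⧸ Ideal.span {ϖ}) p := by
    have hd : ringChar (𝕆 ⧸ Ideal.span {ϖ}) ∣ p := ringChar.dvd hpK
    rcases hp.eq_one_or_self_of_dvd _ hd with h1 | h1
    · exfalso
      have h2 : ((ringChar (𝕆 ⧸ Ideal.span {ϖ}) : ℕ) : 𝕆 ⧸ Ideal.span {ϖ}) = 0 :=
        (ringChar.spec _ _).2 dvd_rfl
      rw [h1, Nat.cast_one] at h2
      exact one_ne_zero h2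
    · rw [← h1]; exact ringChar.charP _
  exact key_lemma_aux p hp 𝕆 ϖ hϖ a (𝕆 ⧸ Ideal.span {ϖ}) (Ideal.Quotient.mk _) hker
    ((hker a).2 ha) n (Fs - Fs') (Fb - Fb') hmem
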